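/- For every Morse sequence W on a simplicial complex K there exists an arranged Morse sequence V on K such that W and V are equivalent (they have the same gradient vector field). -/

import Mathlib

/-! ## Basic notions: simplicial complexes, collapses, expansions, fillings -/

variable {V : Type*} [DecidableEq V]

/-- A (finite) simplicial complex: a finite collection of nonempty finite sets that is
closed under taking nonempty subsets. -/
def IsComplex (K : Finset (Finset V)) : Prop :=
  ∀ τ ∈ K, τ.Nonempty ∧ ∀ σ, σ ⊆ τ → σ.Nonempty → σ ∈ K

/-- `ν` is a facet (inclusion-maximal face) of `K`. -/
def IsFacet (K : Finset (Finset V)) (ν : Finset V) : Prop :=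
  ν ∈ K ∧ ∀ ρ ∈ K, ν ⊆ ρ → ρ = ν

/-- `(σ, τ)` is a free pair for `K`: `σ ⊊ τ` and `τ` is the only face of `K`
strictly containing `σ`. -/
def IsFreePair (K : Finset (Finset V)) (σ τ : Finset V) : Prop :=
  σ ∈ K ∧ τ ∈ K ∧ σ ⊂ τ ∧ ∀ ρ ∈ K, σ ⊂ ρ → ρ = τ

/-- `K` is an elementary expansion of `L` (equivalently, `L` is an elementary collapse
of `K`): `L = K \ {σ, τ}` for some free pair `(σ, τ)` of `K`. -/
def ElemExpansion (L K : Finset (Finset V)) : Prop :=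
  ∃ σ τ, IsFreePair K σ τ ∧ L = K \ {σ, τ}

/-- `K` is an elementary filling of `L` (equivalently, `L` is an elementary perforation
of `K`): `L = K \ {ν}` for some facet `ν` of `K`. -/
def ElemFilling (L K : Finset (Finset V)) : Prop :=
  ∃ ν, IsFacet K ν ∧ L = K \ {ν}

/-- `L` is an elementary collapse of `K`. -/
def ElemCollapse (K L : Finset (Finset V)) : Prop :=
  ∃ σ τ, IsFreePair K σ τ ∧ L = K \ {σ, τ}

/-- `K` collapses onto `L`: there is a sequence of elementary collapses from `K` to `L`. -/
def CollapsesOnto (K L : Finset (Finset V)) : Prop :=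
  Relation.ReflTransGen ElemCollapse K L

/-! ## Morse sequences -/

/-- A Morse sequence `⟨∅ = K₀, …, K_k = K⟩`: each `K_i` is a simplicial complex that is
an elementary expansion or an elementary filling of `K_{i-1}`. -/
structure MorseSeq (V : Type*) [DecidableEq V] where
  k : ℕ
  seq : ℕ → Finset (Finset V)
  cpx : ∀ i ≤ k, IsComplex (seq i)
  init : seq 0 = ∅
  step : ∀ i, 1 ≤ i → i ≤ k → ElemExpansion (seq (i - 1)) (seq i) ∨ ElemFilling (seq (i - 1)) (seq i)

/-- The simplicial complex `K = K_k` on which the Morse sequence lives. -/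
def MorseSeq.cplx (W : MorseSeq V) : Finset (Finset V) := W.seq W.k

/-- A face added by a filling step: a critical face of `W`. -/
def MorseSeq.Critical (W : MorseSeq V) (ν : Finset V) : Prop :=
  ∃ i, 1 ≤ i ∧ i ≤ W.k ∧ W.seq i \ W.seq (i - 1) = {ν}

/-- `(σ, τ)` is a regular pair for `W`: the two faces are added together by an
elementary expansion step. -/
def MorseSeq.Regular (W : MorseSeq V) (σ τ : Finset V) : Prop :=
  ∃ i, 1 ≤ i ∧ i ≤ W.k ∧ σ ⊂ τ ∧ W.seq i \ W.seq (i - 1) = {σ, τ}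

/-- `σ` is lower regular for `W`. -/
def MorseSeq.LowerRegular (W : MorseSeq V) (σ : Finset V) : Prop := ∃ τ, W.Regular σ τ

/-- `τ` is upper regular for `W`. -/
def MorseSeq.UpperRegular (W : MorseSeq V) (τ : Finset V) : Prop := ∃ σ, W.Regular σ τ

/-! ## Chains modulo 2 -/

/-- The boundary `∂(σ)` of a simplex: the chain of its (nonempty) codimension-one faces. -/
def bd (σ : Finset V) : Finset (Finset V) :=
  σ.powerset.filter fun ρ => ρ.Nonempty ∧ ρ.card + 1 = σ.card

/-- The coboundary `δ(σ)` of a simplex in `K`: the chain of faces of `K` of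
codimension one over `σ` containing `σ`. -/
def cobd (K : Finset (Finset V)) (σ : Finset V) : Finset (Finset V) :=
  K.filter fun τ => σ ⊆ τ ∧ σ.card + 1 = τ.card

/-- Mod-2 linear extension: `chainSum c f` is the sum (symmetric difference) of
the chains `f σ` over `σ ∈ c`; an element belongs to it iff it belongs to an odd
number of the `f σ`. -/
def chainSum (c : Finset (Finset V)) (f : Finset V → Finset (Finset V)) : Finset (Finset V) :=
  (c.biUnion f).filter fun ν => (c.filter fun σ => ν ∈ f σ).card % 2 = 1

/-- `c` is a `p`-chain of `K`: a set of `p`-simplices of `K`. -/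
def IsChainOf (K : Finset (Finset V)) (p : ℕ) (c : Finset (Finset V)) : Prop :=
  ∀ ν ∈ c, ν ∈ K ∧ ν.card = p + 1

/-- `c` is a chain of critical `p`-simplices of `W` (an element of `Ŵ[p]`). -/
def IsCritChain (W : MorseSeq V) (p : ℕ) (c : Finset (Finset V)) : Prop :=
  ∀ ν ∈ c, W.Critical ν ∧ ν.card = p + 1

/-! ## Frames, reference and coreference maps -/

/-- A frame on `W`: it assigns to each `p`-simplex of `K` a chain of critical
`p`-simplices of `W`. -/
def IsFrame (W : MorseSeq V) (Υ : Finset V → Finset (Finset V)) : Prop :=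
  ∀ ν ∈ W.cplx, ∀ μ ∈ Υ ν, W.Critical μ ∧ μ.card = ν.card

/-- `Λ` is the reference map of `W`: a frame with `Λ(ν) = ν` for critical `ν`, and
`Λ(τ) = 0`, `Λ(∂τ) = 0` for upper regular `τ`. -/
def IsRefMap (W : MorseSeq V) (Λ : Finset V → Finset (Finset V)) : Prop :=
  IsFrame W Λ ∧ (∀ ν, W.Critical ν → Λ ν = {ν}) ∧
    ∀ τ, W.UpperRegular τ → Λ τ = ∅ ∧ chainSum (bd τ) Λ = ∅

/-- `Λ` is the coreference map of `W`: a frame with `Λ(ν) = ν` for critical `ν`, and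
`Λ(σ) = 0`, `Λ(δσ) = 0` for lower regular `σ`. -/
def IsCorefMap (W : MorseSeq V) (Λ : Finset V → Finset (Finset V)) : Prop :=
  IsFrame W Λ ∧ (∀ ν, W.Critical ν → Λ ν = {ν}) ∧
    ∀ σ, W.LowerRegular σ → Λ σ = ∅ ∧ chainSum (cobd W.cplx σ) Λ = ∅

/-- The extension map `∧̃` of `W` (defined from the coreference map `Vee`):
`∧̃(κ) = {ν ∈ K | κ ∈ ∨(ν)}`. -/
def extMap (W : MorseSeq V) (Vee : Finset V → Finset (Finset V)) (κ : Finset V) :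
    Finset (Finset V) :=
  W.cplx.filter fun ν => κ ∈ Vee ν

/-- The coextension map `∨̃` of `W` (defined from the reference map `Λ`):
`∨̃(κ) = {ν ∈ K | κ ∈ ∧(ν)}`. -/
def coextMap (W : MorseSeq V) (Λ : Finset V → Finset (Finset V)) (κ : Finset V) :
    Finset (Finset V) :=
  W.cplx.filter fun ν => κ ∈ Λ ν

/-! ## Arranged Morse sequences -/

/-- The set of simplices added at step `i` of `W` (a critical face, or a regular pair). -/
def MorseSeq.added (W : MorseSeq V) (i : ℕ) : Finset (Finset V) :=
  W.seq i \ W.seq (i - 1)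

/-- Step `i` of `W` is a filling step (it adds a single, critical, face). -/
def MorseSeq.stepCrit (W : MorseSeq V) (i : ℕ) : Prop := (W.added i).card = 1

/-- Step `i` of `W` is an expansion step (it adds a regular pair). -/
def MorseSeq.stepReg (W : MorseSeq V) (i : ℕ) : Prop := (W.added i).card = 2

/-- The dimension (shifted by one: the largest cardinality) of the element `κ_i`
added at step `i`: the cardinality of the critical face, or of the upper face `τ` of
the regular pair `(σ,τ)`. -/
def MorseSeq.stepDim (W : MorseSeq V) (i : ℕ) : ℕ := (W.added i).sup Finset.card

/-- `W` is an arranged Morse sequence: the dimensions of the elements `κ_i` are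
nondecreasing, with a strict increase from a critical face to a regular pair. -/
def MorseSeq.Arranged (W : MorseSeq V) : Prop :=
  ∀ i, 1 ≤ i → i + 1 ≤ W.k →
    W.stepDim i ≤ W.stepDim (i + 1) ∧
      (W.stepCrit i → W.stepReg (i + 1) → W.stepDim i < W.stepDim (i + 1))

/-- Two Morse sequences are equivalent if they have the same gradient vector field. -/
def MorseSeq.Equiv (W W' : MorseSeq V) : Prop :=
  ∀ σ τ : Finset V, W.Regular σ τ ↔ W'.Regular σ τ

/-! ### Auxiliary material for Statement 7 -/

/-- In a free pair of a simplicial complex, the lower face has codimension one. -/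
private lemma freePair_card {M : Finset (Finset V)} (hM : IsComplex M) {σ τ : Finset V}
    (h : IsFreePair M σ τ) : σ.card + 1 = τ.card := by
  obtain ⟨hσ, hτ, hst, huniq⟩ := h
  have hlt : σ.card < τ.card := Finset.card_lt_card hst
  by_contra hne
  have h2 : 1 + σ.card ≤ τ.card := by omega
  obtain ⟨u, hsu, hut, hcard⟩ := Finset.exists_subsuperset_card_eq (n := 1 + σ.card) hst.subset (by omega) h2
  have hune : u.Nonempty := Finset.card_pos.mp (by omega)
  have huM : u ∈ M := (hM τ hτ).2 u hut hune
  have hσu : σ ⊂ u := by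
    refine hsu.ssubset_of_ne ?_
    intro he; rw [← he] at hcard; omega
  have := huniq u huM hσu
  rw [this] at hcard; omega

/-- The sort key of step `i`: twice the dimension, plus one for critical steps. -/
private def key (W : MorseSeq V) (i : ℕ) : ℕ :=
  2 * W.stepDim i + (if (W.added i).card = 1 then 1 else 0)

/-- Weighted measure used for termination of bubble sort. -/
private def measure' (W : MorseSeq V) : ℕ :=
  ∑ j ∈ Finset.Icc 1 W.k, key W j * 2 ^ (W.k - j)

private lemma step_decomp (W : MorseSeq V) {i : ℕ} (h1 : 1 ≤ i) (h2 : i ≤ W.k) :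
    W.seq (i - 1) ⊆ W.seq i ∧
      ((∃ ν, IsFacet (W.seq i) ν ∧ W.seq (i - 1) = W.seq i \ {ν} ∧ W.added i = {ν} ∧
          W.stepDim i = ν.card ∧ key W i = 2 * ν.card + 1) ∨
       (∃ σ τ, IsFreePair (W.seq i) σ τ ∧ σ.card + 1 = τ.card ∧
          W.seq (i - 1) = W.seq i \ {σ, τ} ∧ W.added i = {σ, τ} ∧
          W.stepDim i = τ.card ∧ key W i = 2 * τ.card)) := by
  rcases W.step i h1 h2 with ⟨σ, τ, hfp, hL⟩ | ⟨ν, hf, hL⟩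
  · have hσM : σ ∈ W.seq i := hfp.1
    have hτM : τ ∈ W.seq i := hfp.2.1
    have hsub : {σ, τ} ⊆ W.seq i := by
      intro x hx; simp only [Finset.mem_insert, Finset.mem_singleton] at hx
      rcases hx with rfl | rfl <;> assumption
    have hadd : W.added i = {σ, τ} := by
      show W.seq i \ W.seq (i - 1) = _
      rw [hL, sdiff_sdiff_eq_self hsub]
    have hne : σ ≠ τ := hfp.2.2.1.ne
    have hcd : σ.card + 1 = τ.card := freePair_card (W.cpx i h2) hfp
    have hdim : W.stepDim i = τ.card := by
      show (W.added i).sup Finset.card = τ.card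
      rw [hadd]
      simp only [Finset.sup_insert, Finset.sup_singleton]
      exact sup_eq_right.mpr (by omega)
    have hc2 : (W.added i).card = 2 := by
      rw [hadd, Finset.card_insert_of_notMem (by simpa using hne), Finset.card_singleton]
    refine ⟨?_, Or.inr ⟨σ, τ, hfp, hcd, hL, hadd, hdim, ?_⟩⟩
    · rw [hL]; exact Finset.sdiff_subset
    · unfold key; rw [hdim, hc2]; simp
  · have hνM : ν ∈ W.seq i := hf.1
    have hadd : W.added i = {ν} := by
      show W.seq i \ W.seq (i - 1) = _
      rw [hL, sdiff_sdiff_eq_self (by simpa using hνM)]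
    have hdim : W.stepDim i = ν.card := by
      show (W.added i).sup Finset.card = ν.card
      rw [hadd, Finset.sup_singleton]
    have hc1 : (W.added i).card = 1 := by rw [hadd, Finset.card_singleton]
    refine ⟨?_, Or.inl ⟨ν, hf, hL, hadd, hdim, ?_⟩⟩
    · rw [hL]; exact Finset.sdiff_subset
    · unfold key; rw [hdim, hc1]; simp

private lemma swap_lemma (W : MorseSeq V) (i : ℕ) (h1 : 1 ≤ i) (h2 : i + 1 ≤ W.k)
    (hkey : key W (i + 1) < key W i) :
    ∃ W' : MorseSeq V, W'.cplx = W.cplx ∧ MorseSeq.Equiv W W' ∧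
      measure' W' < measure' W := by
  have hik : i ≤ W.k := by omega
  obtain ⟨hLM, hA⟩ := step_decomp W h1 hik
  obtain ⟨hMN, hB⟩ := step_decomp W (by omega : 1 ≤ i + 1) h2
  simp only [Nat.add_sub_cancel] at hMN hB
  set L := W.seq (i - 1) with hLdef
  set M := W.seq i with hMdef
  set N := W.seq (i + 1) with hNdef
  have hAeq : W.added i = M \ L := rfl
  have hBeq : W.added (i + 1) = N \ M := by
    show W.seq (i + 1) \ W.seq (i + 1 - 1) = _
    rw [Nat.add_sub_cancel]
  have hAM : (W.added i) ⊆ M := by rw [hAeq]; exact Finset.sdiff_subset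
  have hBN : (W.added (i + 1)) ⊆ N := by rw [hBeq]; exact Finset.sdiff_subset
  have hAL : ∀ a ∈ (W.added i), a ∉ L := by
    intro a ha; rw [hAeq] at ha; exact (Finset.mem_sdiff.mp ha).2
  have hBM : ∀ b ∈ (W.added (i + 1)), b ∉ M := by
    intro b hb; rw [hBeq] at hb; exact (Finset.mem_sdiff.mp hb).2
  have hNmem : ∀ x, x ∈ N ↔ x ∈ L ∨ x ∈ (W.added i) ∨ x ∈ (W.added (i + 1)) := by
    intro x
    rw [hAeq, hBeq, Finset.mem_sdiff, Finset.mem_sdiff]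
    constructor
    · intro hx
      by_cases hxM : x ∈ M
      · by_cases hxL : x ∈ L
        · exact Or.inl hxL
        · exact Or.inr (Or.inl ⟨hxM, hxL⟩)
      · exact Or.inr (Or.inr ⟨hx, hxM⟩)
    · rintro (hx | ⟨hx, _⟩ | ⟨hx, _⟩)
      · exact hMN (hLM hx)
      · exact hMN hx
      · exact hx
  set P : Finset (Finset V) := L ∪ (W.added (i + 1)) with hPdef
  -- numeric facts
  have hBle : ∀ b ∈ (W.added (i + 1)), b.card ≤ W.stepDim (i + 1) := fun b hb => Finset.le_sup hb
  have hcBA : W.stepDim (i + 1) ≤ W.stepDim i := by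
    unfold key at hkey; split_ifs at hkey <;> omega
  have hcBA' : (W.added i).card ≠ 1 → W.stepDim (i + 1) < W.stepDim i := by
    intro h; unfold key at hkey; rw [if_neg h] at hkey; split_ifs at hkey <;> omega
  -- strict subsets of elements of (W.added (i + 1)) are not in (W.added i)
  have K1 : ∀ s : Finset V, ∀ b ∈ (W.added (i + 1)), s ⊂ b → s ∉ (W.added i) := by
    intro s b hb hsb hsA
    have hsc : s.card < b.card := Finset.card_lt_card hsb
    have hbc : b.card ≤ W.stepDim (i + 1) := hBle b hb
    rcases hA with ⟨ν, _, _, hadd, hdim, _⟩ | ⟨σ', τ', _, hcd, _, hadd, hdim, _⟩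
    · rw [hadd, Finset.mem_singleton] at hsA
      subst hsA; omega
    · have hc2 : (W.added i).card ≠ 1 := by
        rw [hadd, Finset.card_insert_of_notMem (by
          simp only [Finset.mem_singleton]
          intro he; have := congrArg Finset.card he; omega)]
        simp
      have hlt := hcBA' hc2
      rw [hadd] at hsA
      simp only [Finset.mem_insert, Finset.mem_singleton] at hsA
      rcases hsA with rfl | rfl <;> omega
  -- P is a complex
  have hPcpx : IsComplex P := by
    intro τ hτ
    rw [Finset.mem_union] at hτ
    rcases hτ with hτ | hτ
    · have hLcpx := W.cpx (i - 1) (by omega)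
      exact ⟨(hLcpx τ hτ).1, fun s hs hsne =>
        Finset.mem_union_left _ ((hLcpx τ hτ).2 s hs hsne)⟩
    · have hτN : τ ∈ N := hBN hτ
      have hNcpx := W.cpx (i + 1) h2
      refine ⟨(hNcpx τ hτN).1, fun s hs hsne => ?_⟩
      have hsN : s ∈ N := (hNcpx τ hτN).2 s hs hsne
      rcases eq_or_ne s τ with rfl | hne
      · exact Finset.mem_union_right _ hτ
      · have hssub : s ⊂ τ := hs.ssubset_of_ne hne
        have hsnA : s ∉ (W.added i) := K1 s τ hτ hssub
        rcases (hNmem s).mp hsN with h | h | h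
        · exact Finset.mem_union_left _ h
        · exact absurd h hsnA
        · exact Finset.mem_union_right _ h
  -- the step L → P : same kind as the step M → N
  have hS3 : ElemExpansion L P ∨ ElemFilling L P := by
    rcases hB with ⟨μ, hfacet, hMeq, hBs, _, _⟩ | ⟨σ, τ, hfp, _, hMeq, hBs, _, _⟩
    · refine Or.inr ⟨μ, ⟨Finset.mem_union_right _ (hBs ▸ Finset.mem_singleton_self μ), ?_⟩, ?_⟩
      · intro ρ hρ hμρ
        have hρN : ρ ∈ N := by
          rcases Finset.mem_union.mp hρ with h | h
          · exact hMN (hLM h)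
          · exact hBN h
        exact hfacet.2 ρ hρN hμρ
      · have hμL : μ ∉ L := fun h => hBM μ (hBs ▸ Finset.mem_singleton_self μ) (hLM h)
        ext x
        simp only [hPdef, Finset.mem_sdiff, Finset.mem_union, hBs, Finset.mem_singleton]
        constructor
        · intro hx; exact ⟨Or.inl hx, fun he => hμL (he ▸ hx)⟩
        · rintro ⟨hx | rfl, hxe⟩
          · exact hx
          · exact absurd rfl hxe
    · have hσB : σ ∈ (W.added (i + 1)) := hBs ▸ Finset.mem_insert_self σ {τ}
      have hτB : τ ∈ (W.added (i + 1)) := hBs ▸ Finset.mem_insert_of_mem (Finset.mem_singleton_self τ)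
      refine Or.inl ⟨σ, τ, ⟨Finset.mem_union_right _ hσB, Finset.mem_union_right _ hτB,
        hfp.2.2.1, ?_⟩, ?_⟩
      · intro ρ hρ hσρ
        have hρN : ρ ∈ N := by
          rcases Finset.mem_union.mp hρ with h | h
          · exact hMN (hLM h)
          · exact hBN h
        exact hfp.2.2.2 ρ hρN hσρ
      · have hσL : σ ∉ L := fun h => hBM σ hσB (hLM h)
        have hτL : τ ∉ L := fun h => hBM τ hτB (hLM h)
        ext x
        simp only [hPdef, Finset.mem_sdiff, Finset.mem_union, hBs, Finset.mem_insert,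
          Finset.mem_singleton]
        constructor
        · intro hx
          exact ⟨Or.inl hx, by rintro (rfl | rfl) <;> [exact hσL hx; exact hτL hx]⟩
        · rintro ⟨hx | (rfl | rfl), hxe⟩
          · exact hx
          · exact absurd (Or.inl rfl) hxe
          · exact absurd (Or.inr rfl) hxe
  -- the step P → N : same kind as the step L → M
  have hS4 : ElemExpansion P N ∨ ElemFilling P N := by
    rcases hA with ⟨ν, hfacet, hLeq, hAs, hdim, _⟩ | ⟨σ', τ', hfp, hcd, hLeq, hAs, hdim, _⟩
    · have hνA : ν ∈ (W.added i) := hAs ▸ Finset.mem_singleton_self ν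
      refine Or.inr ⟨ν, ⟨hMN (hAM hνA), ?_⟩, ?_⟩
      · intro ρ hρ hνρ
        rcases (hNmem ρ).mp hρ with h | h | h
        · exact hfacet.2 ρ (hLM h) hνρ
        · exact hfacet.2 ρ (hAM h) hνρ
        · have hc : ρ.card ≤ ν.card := by
            have := hBle ρ h; omega
          exact (Finset.eq_of_subset_of_card_le hνρ hc).symm
      · ext x
        simp only [hPdef, Finset.mem_sdiff, Finset.mem_union, Finset.mem_singleton]
        constructor
        · rintro (hx | hx)
          · exact ⟨hMN (hLM hx), fun he => hAL ν hνA (he ▸ hx)⟩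
          · exact ⟨hBN hx, fun he => hBM x hx (he ▸ hAM hνA)⟩
        · rintro ⟨hx, hxe⟩
          rcases (hNmem x).mp hx with h | h | h
          · exact Or.inl h
          · rw [hAs, Finset.mem_singleton] at h; exact absurd h hxe
          · exact Or.inr h
    · have hσA : σ' ∈ (W.added i) := hAs ▸ Finset.mem_insert_self σ' {τ'}
      have hτA : τ' ∈ (W.added i) := hAs ▸ Finset.mem_insert_of_mem (Finset.mem_singleton_self τ')
      have hc2 : (W.added i).card ≠ 1 := by
        rw [hAs, Finset.card_insert_of_notMem (by
          simp only [Finset.mem_singleton]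
          intro he; have := congrArg Finset.card he; omega)]
        simp
      have hlt := hcBA' hc2
      refine Or.inl ⟨σ', τ', ⟨hMN (hAM hσA), hMN (hAM hτA), hfp.2.2.1, ?_⟩, ?_⟩
      · intro ρ hρ hσρ
        rcases (hNmem ρ).mp hρ with h | h | h
        · exact hfp.2.2.2 ρ (hLM h) hσρ
        · exact hfp.2.2.2 ρ (hAM h) hσρ
        · exfalso
          have h1' : ρ.card ≤ W.stepDim (i + 1) := hBle ρ h
          have h2' : σ'.card < ρ.card := Finset.card_lt_card hσρ
          omega
      · ext x
        simp only [hPdef, Finset.mem_sdiff, Finset.mem_union, Finset.mem_insert,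
          Finset.mem_singleton]
        constructor
        · rintro (hx | hx)
          · refine ⟨hMN (hLM hx), ?_⟩
            rintro (he | he) <;> rw [he] at hx
            · exact hAL σ' hσA hx
            · exact hAL τ' hτA hx
          · refine ⟨hBN hx, ?_⟩
            rintro (he | he) <;> rw [he] at hx
            · exact hBM σ' hx (hAM hσA)
            · exact hBM τ' hx (hAM hτA)
        · rintro ⟨hx, hxe⟩
          rcases (hNmem x).mp hx with h | h | h
          · exact Or.inl h
          · rw [hAs] at h
            simp only [Finset.mem_insert, Finset.mem_singleton] at h
            exact absurd h hxe
          · exact Or.inr h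
  -- difference identities
  have hNP : N \ P = W.added i := by
    ext x
    simp only [hPdef, Finset.mem_sdiff, Finset.mem_union]
    constructor
    · rintro ⟨hx, hx2⟩
      rcases (hNmem x).mp hx with h | h | h
      · exact absurd (Or.inl h) hx2
      · exact h
      · exact absurd (Or.inr h) hx2
    · intro hx
      exact ⟨hMN (hAM hx), fun h =>
        h.elim (fun hL' => hAL x hx hL') (fun hB' => hBM x hB' (hAM hx))⟩
  have hPL : P \ L = W.added (i + 1) := by
    ext x
    simp only [hPdef, Finset.mem_sdiff, Finset.mem_union]
    constructor
    · rintro ⟨hx | hx, hx2⟩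
      · exact absurd hx hx2
      · exact hx
    · intro hx
      exact ⟨Or.inr hx, fun h => hBM x hx (hLM h)⟩
  -- the swapped Morse sequence
  have hcpx' : ∀ j ≤ W.k, IsComplex (if j = i then P else W.seq j) := by
    intro j hj
    by_cases hji : j = i
    · rw [if_pos hji]; exact hPcpx
    · rw [if_neg hji]; exact W.cpx j hj
  have hinit' : (if 0 = i then P else W.seq 0) = ∅ := by
    rw [if_neg (by omega : (0 : ℕ) ≠ i)]; exact W.init
  have hstep' : ∀ j, 1 ≤ j → j ≤ W.k →
      ElemExpansion (if j - 1 = i then P else W.seq (j - 1)) (if j = i then P else W.seq j) ∨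
      ElemFilling (if j - 1 = i then P else W.seq (j - 1)) (if j = i then P else W.seq j) := by
    intro j hj1 hjk
    by_cases hji : j = i
    · rw [if_pos hji, if_neg (show ¬ j - 1 = i by omega)]
      rw [hji] at *
      exact hS3
    · by_cases hji' : j = i + 1
      · rw [if_neg hji, if_pos (show j - 1 = i by omega)]
        rw [hji'] at *
        exact hS4
      · rw [if_neg hji, if_neg (show ¬ j - 1 = i by omega)]
        exact W.step j hj1 hjk
  set W' : MorseSeq V :=
    { k := W.k, seq := fun j => if j = i then P else W.seq j,
      cpx := hcpx', init := hinit', step := hstep' } with hW'def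
  have haddi : W'.added i = W.added (i + 1) := by
    show (if i = i then P else W.seq i) \ (if i - 1 = i then P else W.seq (i - 1)) = _
    rw [if_pos rfl, if_neg (show ¬ i - 1 = i by omega)]
    exact hPL
  have haddi1 : W'.added (i + 1) = W.added i := by
    show (if i + 1 = i then P else W.seq (i + 1))
        \ (if i + 1 - 1 = i then P else W.seq (i + 1 - 1)) = _
    rw [if_neg (show ¬ i + 1 = i by omega), if_pos (show i + 1 - 1 = i by omega)]
    exact hNP
  have haddj : ∀ j, j ≠ i → j ≠ i + 1 → W'.added j = W.added j := by
    intro j hj hj'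
    show (if j = i then P else W.seq j) \ (if j - 1 = i then P else W.seq (j - 1)) = _
    rw [if_neg hj, if_neg (show ¬ j - 1 = i by omega)]
    rfl
  have keyi : key W' i = key W (i + 1) := by
    unfold key MorseSeq.stepDim; rw [haddi]
  have keyi1 : key W' (i + 1) = key W i := by
    unfold key MorseSeq.stepDim; rw [haddi1]
  have keyj : ∀ j, j ≠ i → j ≠ i + 1 → key W' j = key W j := by
    intro j hj hj'
    unfold key MorseSeq.stepDim; rw [haddj j hj hj']
  refine ⟨W', ?_, ?_, ?_⟩
  · show (if W.k = i then P else W.seq W.k) = W.seq W.k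
    rw [if_neg (by omega : W.k ≠ i)]
  · intro σ τ
    constructor
    · rintro ⟨j, hj1, hjk, hst, heq⟩
      have heq' : W.added j = {σ, τ} := heq
      by_cases hji : j = i
      · refine ⟨i + 1, by omega, h2, hst, ?_⟩
        show W'.added (i + 1) = {σ, τ}
        rw [haddi1, ← hji]; exact heq'
      · by_cases hji' : j = i + 1
        · refine ⟨i, h1, hik, hst, ?_⟩
          show W'.added i = {σ, τ}
          rw [haddi, ← hji']; exact heq'
        · refine ⟨j, hj1, hjk, hst, ?_⟩
          show W'.added j = {σ, τ}
          rw [haddj j hji hji']; exact heq'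
    · rintro ⟨j, hj1, hjk, hst, heq⟩
      have heq' : W'.added j = {σ, τ} := heq
      have hjk' : j ≤ W.k := hjk
      by_cases hji : j = i
      · refine ⟨i + 1, by omega, h2, hst, ?_⟩
        show W.added (i + 1) = {σ, τ}
        rw [hji] at heq'
        rw [← haddi]; exact heq'
      · by_cases hji' : j = i + 1
        · refine ⟨i, h1, hik, hst, ?_⟩
          show W.added i = {σ, τ}
          rw [hji'] at heq'
          rw [← haddi1]; exact heq'
        · refine ⟨j, hj1, hjk', hst, ?_⟩
          show W.added j = {σ, τ}
          rw [← haddj j hji hji']; exact heq'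
  · have hmv : measure' W' = ∑ j ∈ Finset.Icc 1 W.k, key W' j * 2 ^ (W.k - j) := rfl
    have hmem_i : i ∈ Finset.Icc 1 W.k := by
      simp only [Finset.mem_Icc]; omega
    have hmem_i1 : i + 1 ∈ (Finset.Icc 1 W.k).erase i := by
      simp only [Finset.mem_erase, Finset.mem_Icc]; omega
    have hsplit : ∀ g : ℕ → ℕ, ∑ j ∈ Finset.Icc 1 W.k, g j
        = g i + (g (i + 1) + ∑ j ∈ ((Finset.Icc 1 W.k).erase i).erase (i + 1), g j) := by
      intro g
      rw [Finset.add_sum_erase _ g hmem_i1, Finset.add_sum_erase _ g hmem_i]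
    have htail : ∑ j ∈ ((Finset.Icc 1 W.k).erase i).erase (i + 1), key W' j * 2 ^ (W.k - j)
        = ∑ j ∈ ((Finset.Icc 1 W.k).erase i).erase (i + 1), key W j * 2 ^ (W.k - j) := by
      refine Finset.sum_congr rfl fun j hj => ?_
      simp only [Finset.mem_erase] at hj
      rw [keyj j hj.2.1 hj.1]
    show measure' W' < measure' W
    rw [hmv]
    unfold measure'
    rw [hsplit (fun j => key W' j * 2 ^ (W.k - j)), hsplit (fun j => key W j * 2 ^ (W.k - j))]
    rw [keyi, keyi1, htail]
    have hw1 : 2 ^ (W.k - i) = 2 ^ (W.k - (i + 1)) * 2 := by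
      rw [← pow_succ]
      congr 1
      omega
    rw [hw1]
    set w := 2 ^ (W.k - (i + 1)) with hwdef
    have hwpos : 1 ≤ w := Nat.one_le_two_pow
    set a := key W i
    set b := key W (i + 1)
    have : b * (w * 2) + a * w < a * (w * 2) + b * w := by nlinarith
    omega

private lemma arranged_of_sorted (W : MorseSeq V)
    (h : ∀ i, 1 ≤ i → i + 1 ≤ W.k → key W i ≤ key W (i + 1)) : W.Arranged := by
  intro i h1 h2
  have hk := h i h1 h2
  unfold key at hk
  constructor
  · split_ifs at hk <;> omega
  · intro hc hr
    have hc' : (W.added i).card = 1 := hc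
    have hr' : (W.added (i + 1)).card = 2 := hr
    rw [if_pos hc', if_neg (by omega : ¬ (W.added (i + 1)).card = 1)] at hk
    omega

/-- Every Morse sequence is equivalent (same gradient vector field)
to an arranged Morse sequence on the same complex. -/
theorem exists_equivalent_arranged_morseSeq (W : MorseSeq V) :
    ∃ W' : MorseSeq V, W'.cplx = W.cplx ∧ W'.Arranged ∧ MorseSeq.Equiv W W' := by
  suffices h : ∀ n (W : MorseSeq V), measure' W ≤ n →
      ∃ W' : MorseSeq V, W'.cplx = W.cplx ∧ W'.Arranged ∧ MorseSeq.Equiv W W' from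
    h (measure' W) W le_rfl
  intro n
  induction n using Nat.strong_induction_on with
  | _ n ih =>
    intro W hW
    by_cases hsorted : ∀ i, 1 ≤ i → i + 1 ≤ W.k → key W i ≤ key W (i + 1)
    · exact ⟨W, rfl, arranged_of_sorted W hsorted, fun σ τ => Iff.rfl⟩
    · push_neg at hsorted
      obtain ⟨i, h1, h2, hkey⟩ := hsorted
      obtain ⟨W'', hcplx'', hequiv'', hlt⟩ := swap_lemma W i h1 h2 hkey
      have hle : measure' W'' < n := lt_of_lt_of_le hlt hW
      obtain ⟨W', hcplx', harr', hequiv'⟩ := ih (measure' W'') hle W'' le_rfl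
      exact ⟨W', hcplx'.trans hcplx'', harr',
        fun σ τ => (hequiv'' σ τ).trans (hequiv' σ τ)⟩
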